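/- Let (f_D)_{D≥1} be a strictly increasing sequence of positive reals whose difference sequence (f_{D+1} − f_D)_{D≥1} is strictly decreasing and positive. Then for all positive integers X and k: |Σ_{D=1}^{X} e^{2πi k f_D}| < π·k·f_{X+1} + 1/(π·k·(f_{X+2} − f_{X+1})). -/

import Mathlib

open Real

lemma two_I_sin (z : ℂ) : Complex.exp (z * Complex.I) - Complex.exp (-z * Complex.I)
    = 2 * Complex.I * Complex.sin z := by
  rw [Complex.sin]; ring_nf; rw [Complex.I_sq]; ring

lemma expm1 (θ : ℝ) : Complex.exp ((θ:ℂ) * Complex.I) - 1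
    = Complex.exp (((θ/2 : ℝ):ℂ) * Complex.I) * (2 * Complex.I * Complex.sin ((θ/2 : ℝ) : ℂ)) := by
  rw [← two_I_sin, mul_sub, ← Complex.exp_add, ← Complex.exp_add]
  push_cast; ring_nf; rw [Complex.exp_zero]; ring

lemma abs_expm1 (θ : ℝ) : ‖Complex.exp ((θ:ℂ) * Complex.I) - 1‖
    = 2 * |Real.sin (θ/2)| := by
  rw [expm1, norm_mul, Complex.norm_exp_ofReal_mul_I, one_mul, norm_mul, norm_mul,
    Complex.norm_two, Complex.norm_I, ← Complex.ofReal_sin, Complex.norm_real, Real.norm_eq_abs, mul_one]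

lemma abs_expm1' {w : ℝ} (h1 : 0 < w) (h2 : w < 1) :
    ‖Complex.exp ((↑(2*π*w)) * Complex.I) - 1‖ = 2 * Real.sin (π*w) := by
  have := abs_expm1 (2*π*w)
  rw [show 2*π*w/2 = π*w by ring] at this
  rw [this, abs_of_pos]
  exact Real.sin_pos_of_pos_of_lt_pi (by positivity)
    (by nlinarith [Real.pi_pos])

lemma em1_ne {w : ℝ} (h1 : 0 < w) (h2 : w < 1) :
    Complex.exp ((↑(2*π*w)) * Complex.I) - 1 ≠ 0 := by
  intro h
  have := abs_expm1' h1 h2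
  rw [h, norm_zero] at this
  have hs : 0 < Real.sin (π*w) := Real.sin_pos_of_pos_of_lt_pi (by positivity)
    (by nlinarith [Real.pi_pos])
  linarith

lemma abs_cinv {w : ℝ} (h1 : 0 < w) (h2 : w < 1) :
    ‖(Complex.exp ((↑(2*π*w)) * Complex.I) - 1)⁻¹‖ = 1 / (2 * Real.sin (π*w)) := by
  rw [norm_inv, abs_expm1' h1 h2, one_div]

-- z D = c D * (z (D+1) - z D)
lemma zstep (u : ℕ → ℝ) (D : ℕ) (h1 : 0 < u (D+1) - u D) (h2 : u (D+1) - u D < 1) :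
    Complex.exp ((↑(2*π*u D)) * Complex.I)
      = (Complex.exp ((↑(2*π*(u (D+1) - u D))) * Complex.I) - 1)⁻¹
        * (Complex.exp ((↑(2*π*u (D+1))) * Complex.I) - Complex.exp ((↑(2*π*u D)) * Complex.I)) := by
  have key : Complex.exp ((↑(2*π*u (D+1))) * Complex.I)
      = Complex.exp ((↑(2*π*u D)) * Complex.I) * Complex.exp ((↑(2*π*(u (D+1) - u D))) * Complex.I) := by
    rw [← Complex.exp_add]
    congr 1
    push_cast; ring
  set z := Complex.exp ((↑(2*π*u D)) * Complex.I) with hz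
  set E := Complex.exp ((↑(2*π*(u (D+1) - u D))) * Complex.I) with hE
  rw [key]
  have hne : E - 1 ≠ 0 := em1_ne h1 h2
  calc z = z * ((E-1)⁻¹ * (E-1)) := by rw [inv_mul_cancel₀ hne, mul_one]
    _ = (E-1)⁻¹ * (z * E - z) := by ring

lemma cdiff_abs {a b : ℝ} (ha1 : 0 < a) (ha2 : a < 1/2) (hb1 : 0 < b) (hba : b ≤ a) :
    ‖(Complex.exp ((↑(2*π*a)) * Complex.I) - 1)⁻¹
      - (Complex.exp ((↑(2*π*b)) * Complex.I) - 1)⁻¹‖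
    = Real.cos (π*b) / (2*Real.sin (π*b)) - Real.cos (π*a) / (2*Real.sin (π*a)) := by
  have ha2' : a < 1 := by linarith
  have hb2' : b < 1 := by linarith
  set A := Complex.exp ((↑(2*π*a)) * Complex.I) with hAdef
  set B := Complex.exp ((↑(2*π*b)) * Complex.I) with hBdef
  have hA : A - 1 ≠ 0 := em1_ne ha1 ha2'
  have hB : B - 1 ≠ 0 := em1_ne hb1 hb2'
  have hid : (A-1)⁻¹ - (B-1)⁻¹ = (B - A) * ((A-1)⁻¹ * (B-1)⁻¹) := by
    field_simp
    try ring
  have hBA : B - A = A * (Complex.exp ((↑(2*π*(b-a))) * Complex.I) - 1) := by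
    rw [mul_sub, mul_one, ← Complex.exp_add, hBdef]
    congr 2
    push_cast; ring
  have habsBA : ‖B - A‖ = 2 * Real.sin (π*(a-b)) := by
    rw [hBA, norm_mul, Complex.norm_exp_ofReal_mul_I, one_mul, abs_expm1,
      show 2*π*(b-a)/2 = -(π*(a-b)) by ring, Real.sin_neg, abs_neg, abs_of_nonneg]
    apply Real.sin_nonneg_of_nonneg_of_le_pi (by nlinarith [Real.pi_pos])
    nlinarith [Real.pi_pos]
  have hsa : 0 < Real.sin (π*a) :=
    Real.sin_pos_of_pos_of_lt_pi (by positivity) (by nlinarith [Real.pi_pos])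
  have hsb : 0 < Real.sin (π*b) :=
    Real.sin_pos_of_pos_of_lt_pi (by positivity) (by nlinarith [Real.pi_pos])
  rw [hid, norm_mul, norm_mul, habsBA, abs_cinv ha1 ha2', abs_cinv hb1 hb2',
    show π*(a-b) = π*a - π*b by ring, Real.sin_sub]
  field_simp

lemma block (u : ℕ → ℝ) (M : ℕ)
    (hw1 : ∀ D, M ≤ D → 0 < u (D+1) - u D)
    (hw2 : ∀ D, M ≤ D → u (D+1) - u D < 1/2)
    (hdec : ∀ D, M ≤ D → u (D+2) - u (D+1) ≤ u (D+1) - u D) :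
    ∀ n, M ≤ n →
      ‖∑ D ∈ Finset.Icc M n, Complex.exp ((↑(2*π*u D)) * Complex.I)
        - (Complex.exp ((↑(2*π*(u (n+1) - u n))) * Complex.I) - 1)⁻¹
          * Complex.exp ((↑(2*π*u (n+1))) * Complex.I)‖
      ≤ (1 - Real.cos (π*(u (M+1) - u M))) / (2 * Real.sin (π*(u (M+1) - u M)))
        + Real.cos (π*(u (n+1) - u n)) / (2 * Real.sin (π*(u (n+1) - u n))) := by
  intro n hn
  induction n, hn using Nat.le_induction with
  | base =>
    rw [Finset.Icc_self, Finset.sum_singleton]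
    have h1 := hw1 M le_rfl
    have h2 : u (M+1) - u M < 1 := by linarith [hw2 M le_rfl]
    have hz := zstep u M h1 h2
    have hneg : Complex.exp ((↑(2*π*u M)) * Complex.I)
        - (Complex.exp ((↑(2*π*(u (M+1) - u M))) * Complex.I) - 1)⁻¹
          * Complex.exp ((↑(2*π*u (M+1))) * Complex.I)
        = -((Complex.exp ((↑(2*π*(u (M+1) - u M))) * Complex.I) - 1)⁻¹
            * Complex.exp ((↑(2*π*u M)) * Complex.I)) := by
      linear_combination hz
    rw [hneg, norm_neg, norm_mul, abs_cinv h1 h2, Complex.norm_exp_ofReal_mul_I,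
      mul_one, ← add_div, sub_add_cancel]
  | succ n hn ih =>
    simp only [show n+1+1 = n+2 from rfl]
    have h1n := hw1 n hn
    have h2n := hw2 n hn
    have h1n1 := hw1 (n+1) (by omega)
    have h2n1 := hw2 (n+1) (by omega)
    have hz := zstep u (n+1) h1n1 (by linarith)
    rw [Finset.sum_Icc_succ_top (by omega : M ≤ n+1)]
    have key : (∑ D ∈ Finset.Icc M n, Complex.exp ((↑(2*π*u D)) * Complex.I))
          + Complex.exp ((↑(2*π*u (n+1))) * Complex.I)
        - (Complex.exp ((↑(2*π*(u (n+2) - u (n+1)))) * Complex.I) - 1)⁻¹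
          * Complex.exp ((↑(2*π*u (n+2))) * Complex.I)
        = ((∑ D ∈ Finset.Icc M n, Complex.exp ((↑(2*π*u D)) * Complex.I))
            - (Complex.exp ((↑(2*π*(u (n+1) - u n))) * Complex.I) - 1)⁻¹
              * Complex.exp ((↑(2*π*u (n+1))) * Complex.I))
          + ((Complex.exp ((↑(2*π*(u (n+1) - u n))) * Complex.I) - 1)⁻¹
              - (Complex.exp ((↑(2*π*(u (n+2) - u (n+1)))) * Complex.I) - 1)⁻¹)
            * Complex.exp ((↑(2*π*u (n+1))) * Complex.I) := by
      linear_combination hz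
    rw [key]
    have habs2 : ‖((Complex.exp ((↑(2*π*(u (n+1) - u n))) * Complex.I) - 1)⁻¹
              - (Complex.exp ((↑(2*π*(u (n+2) - u (n+1)))) * Complex.I) - 1)⁻¹)
            * Complex.exp ((↑(2*π*u (n+1))) * Complex.I)‖
        = Real.cos (π*(u (n+2) - u (n+1))) / (2*Real.sin (π*(u (n+2) - u (n+1))))
          - Real.cos (π*(u (n+1) - u n)) / (2*Real.sin (π*(u (n+1) - u n))) := by
      rw [norm_mul, Complex.norm_exp_ofReal_mul_I, mul_one]
      exact cdiff_abs h1n h2n h1n1 (hdec n hn)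
    calc ‖_‖ ≤ ‖((∑ D ∈ Finset.Icc M n, Complex.exp ((↑(2*π*u D)) * Complex.I))
            - (Complex.exp ((↑(2*π*(u (n+1) - u n))) * Complex.I) - 1)⁻¹
              * Complex.exp ((↑(2*π*u (n+1))) * Complex.I))‖
          + ‖((Complex.exp ((↑(2*π*(u (n+1) - u n))) * Complex.I) - 1)⁻¹
              - (Complex.exp ((↑(2*π*(u (n+2) - u (n+1)))) * Complex.I) - 1)⁻¹)
            * Complex.exp ((↑(2*π*u (n+1))) * Complex.I)‖ := norm_add_le _ _
      _ ≤ _ := by rw [habs2]; linarith [ih]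

lemma headbound {t : ℝ} (h1 : 0 < t) (h2 : t ≤ π/2) :
    (1 - Real.cos t) / (2 * Real.sin t) ≤ Real.sqrt 2 * t / 4 := by
  have hs1 : 0 < t/2 := by linarith
  have hs2 : t/2 ≤ π/4 := by linarith
  have hpi := Real.pi_gt_three
  have hsin : Real.sin t = 2 * Real.sin (t/2) * Real.cos (t/2) := by
    rw [show t = 2*(t/2) by ring, Real.sin_two_mul]; ring_nf
  have hcos : Real.cos t = 2 * Real.cos (t/2)^2 - 1 := by
    rw [show t = 2*(t/2) by ring, Real.cos_two_mul]; ring_nf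
  have hpyth := Real.sin_sq_add_cos_sq (t/2)
  have hsins : Real.sin (t/2) ≤ t/2 := Real.sin_le (by linarith)
  have hsinpos : 0 < Real.sin (t/2) :=
    Real.sin_pos_of_pos_of_lt_pi hs1 (by linarith)
  have hcospos : 0 < Real.cos (t/2) := Real.cos_pos_of_mem_Ioo ⟨by linarith, by linarith⟩
  have hcoss : Real.sqrt 2 / 2 ≤ Real.cos (t/2) := by
    rw [← Real.cos_pi_div_four]
    exact Real.cos_le_cos_of_nonneg_of_le_pi (by linarith) (by linarith) hs2
  have hsq : Real.sqrt 2 ^ 2 = 2 := Real.sq_sqrt (by norm_num)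
  have hsqnn : 0 ≤ Real.sqrt 2 := Real.sqrt_nonneg 2
  have h2cos : 1 ≤ Real.sqrt 2 * Real.cos (t/2) := by nlinarith
  have hkey : Real.sin (t/2) ≤ Real.sqrt 2 * (t/2) * Real.cos (t/2) := by nlinarith
  have hsint : 0 < Real.sin t := by rw [hsin]; positivity
  rw [div_le_iff₀ (by positivity)]
  nlinarith [mul_le_mul_of_nonneg_left hkey hsinpos.le]

lemma tailbound {t : ℝ} (h1 : 0 < t) (h2 : t ≤ π/2) :
    (1 + Real.cos t) / (2 * Real.sin t) ≤ 1 / t := by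
  have hs1 : 0 < t/2 := by linarith
  have hs2 : t/2 ≤ π/4 := by linarith
  have hpi := Real.pi_gt_three
  have hsin : Real.sin t = 2 * Real.sin (t/2) * Real.cos (t/2) := by
    rw [show t = 2*(t/2) by ring, Real.sin_two_mul]; ring_nf
  have hcos : Real.cos t = 2 * Real.cos (t/2)^2 - 1 := by
    rw [show t = 2*(t/2) by ring, Real.cos_two_mul]; ring_nf
  have hsinpos : 0 < Real.sin (t/2) :=
    Real.sin_pos_of_pos_of_lt_pi hs1 (by linarith)
  have hcospos : 0 < Real.cos (t/2) := Real.cos_pos_of_mem_Ioo ⟨by linarith, by linarith⟩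
  have htan : t/2 ≤ Real.tan (t/2) := Real.le_tan (by linarith) (by linarith)
  rw [Real.tan_eq_sin_div_cos, le_div_iff₀ hcospos] at htan
  have hsint : 0 < Real.sin t := by rw [hsin]; positivity
  rw [div_le_div_iff₀ (by positivity) h1]
  nlinarith

lemma tele (f : ℕ → ℝ) : ∀ n, ∑ D ∈ Finset.Icc 1 n, (f (D+1) - f D) = f (n+1) - f 1 := by
  intro n
  induction n with
  | zero => simp
  | succ n ih => rw [Finset.sum_Icc_succ_top (by omega), ih]; ring

lemma fmono (f : ℕ → ℝ) (hfmono : ∀ D, 1 ≤ D → f D < f (D+1)) :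
    ∀ a b, 1 ≤ a → a ≤ b → f a ≤ f b := by
  intro a b ha hab
  induction b, hab using Nat.le_induction with
  | base => exact le_rfl
  | succ b hb ih => exact ih.trans (hfmono b (by omega)).le

lemma wanti (f : ℕ → ℝ) (hfdec : ∀ D, 1 ≤ D → f (D+2) - f (D+1) < f (D+1) - f D) :
    ∀ a b, 1 ≤ a → a ≤ b → f (b+1) - f b ≤ f (a+1) - f a := by
  intro a b ha hab
  induction b, hab using Nat.le_induction with
  | base => exact le_rfl
  | succ b hb ih => exact le_trans (hfdec b (by omega)).le ih

set_option maxHeartbeats 2000000 in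
theorem stmt10
    -- `(f_D)_{D ≥ 1}` is a strictly increasing sequence of positive reals
    (f : ℕ → ℝ)
    (hfpos : ∀ D, 1 ≤ D → 0 < f D)
    (hfmono : ∀ D, 1 ≤ D → f D < f (D + 1))
    -- whose difference sequence is strictly decreasing (and positive):
    (hfdec : ∀ D, 1 ≤ D → f (D + 2) - f (D + 1) < f (D + 1) - f D)
    (X k : ℕ) (hX : 1 ≤ X) (hk : 1 ≤ k) :
    ‖∑ D ∈ Finset.Icc 1 X,
        Complex.exp (2 * Real.pi * Complex.I * (k : ℂ) * (f D : ℂ))‖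
      < Real.pi * (k : ℝ) * f (X + 1)
        + 1 / (Real.pi * (k : ℝ) * (f (X + 2) - f (X + 1))) := by
  have hπ : 0 < π := Real.pi_pos
  have hπ3 : 3 < π := Real.pi_gt_three
  have hk0 : (1:ℝ) ≤ (k:ℝ) := by exact_mod_cast hk
  have hkpos : (0:ℝ) < (k:ℝ) := by linarith
  have hf1 : 0 < f 1 := hfpos 1 le_rfl
  have hfX1 : 0 < f (X+1) := hfpos (X+1) (by omega)
  have hδ : 0 < f (X+2) - f (X+1) := by linarith [hfmono (X+1) (by omega)]
  have hδX : f (X+2) - f (X+1) < f (X+1) - f X := hfdec X hX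
  have hrpos : 0 < 1 / (π * (k:ℝ) * (f (X+2) - f (X+1))) := by positivity
  -- the scaled sequence
  obtain ⟨g, hgval⟩ : ∃ g : ℕ → ℝ, ∀ D, g D = (k:ℝ) * f D := ⟨_, fun D => rfl⟩
  have hwpos : ∀ D, 1 ≤ D → 0 < g (D+1) - g D := by
    intro D hD
    have := hfmono D hD
    simp only [hgval]
    nlinarith
  have hwanti : ∀ a b, 1 ≤ a → a ≤ b → g (b+1) - g b ≤ g (a+1) - g a := by
    intro a b ha hab
    have := wanti f hfdec a b ha hab
    simp only [hgval]
    nlinarith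
  have hgmono : ∀ a b, 1 ≤ a → a ≤ b → g a ≤ g b := by
    intro a b ha hab
    have := fmono f hfmono a b ha hab
    simp only [hgval]
    nlinarith
  -- convert the summand
  have hconv : (∑ D ∈ Finset.Icc 1 X,
        Complex.exp (2 * Real.pi * Complex.I * (k : ℂ) * (f D : ℂ)))
      = ∑ D ∈ Finset.Icc 1 X, Complex.exp ((↑(2*π*g D)) * Complex.I) := by
    refine Finset.sum_congr rfl fun D _ => ?_
    congr 1
    simp only [hgval]
    push_cast
    ring
  rw [hconv]
  by_cases hcase : g (X+1) - g X < 1/2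
  · -- main case: Kusmin-Landau from index M on
    classical
    have hex : ∃ D, 1 ≤ D ∧ g (D+1) - g D < 1/2 := ⟨X, hX, hcase⟩
    set M := Nat.find hex with hMdef
    obtain ⟨hM1, hMw⟩ := Nat.find_spec hex
    have hMX : M ≤ X := Nat.find_le ⟨hX, hcase⟩
    have hw1 : ∀ D, M ≤ D → 0 < g (D+1) - g D := fun D hD => hwpos D (le_trans hM1 hD)
    have hw2 : ∀ D, M ≤ D → g (D+1) - g D < 1/2 :=
      fun D hD => lt_of_le_of_lt (hwanti M D hM1 hD) hMw
    have hdec : ∀ D, M ≤ D → g (D+2) - g (D+1) ≤ g (D+1) - g D := by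
      intro D hD
      have := hfdec D (le_trans hM1 hD)
      simp only [hgval]
      nlinarith
    have hblock := block g M hw1 hw2 hdec X hMX
    -- split the sum at M
    have hsplit : (∑ D ∈ Finset.Icc 1 X, Complex.exp ((↑(2*π*g D)) * Complex.I))
        = (∑ D ∈ Finset.Icc 1 (M-1), Complex.exp ((↑(2*π*g D)) * Complex.I))
          + ∑ D ∈ Finset.Icc M X, Complex.exp ((↑(2*π*g D)) * Complex.I) := by
      have e1 : Finset.Icc 1 X = Finset.Ioc 0 X := by ext a; simp; omega
      have e2 : Finset.Icc 1 (M-1) = Finset.Ioc 0 (M-1) := by ext a; simp; omega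
      have e3 : Finset.Icc M X = Finset.Ioc (M-1) X := by
        ext a; simp only [Finset.mem_Icc, Finset.mem_Ioc]; omega
      rw [e1, e2, e3]
      exact (Finset.sum_Ioc_consecutive _ (by omega) (by omega)).symm
    rw [hsplit]
    -- part 1 : trivial bound
    have hpart1 : ‖∑ D ∈ Finset.Icc 1 (M-1), Complex.exp ((↑(2*π*g D)) * Complex.I)‖
        ≤ 2 * (g M - g 1) := by
      calc ‖∑ D ∈ Finset.Icc 1 (M-1), Complex.exp ((↑(2*π*g D)) * Complex.I)‖
          ≤ ∑ D ∈ Finset.Icc 1 (M-1), ‖Complex.exp ((↑(2*π*g D)) * Complex.I)‖ :=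
            norm_sum_le _ _
        _ = ∑ D ∈ Finset.Icc 1 (M-1), (1:ℝ) := by
            refine Finset.sum_congr rfl fun D _ => ?_
            exact Complex.norm_exp_ofReal_mul_I _
        _ ≤ ∑ D ∈ Finset.Icc 1 (M-1), 2*(g (D+1) - g D) := by
            refine Finset.sum_le_sum fun D hD => ?_
            simp only [Finset.mem_Icc] at hD
            have hnot := Nat.find_min hex (show D < M by omega)
            push_neg at hnot
            have := hnot hD.1
            linarith
        _ = 2 * (g ((M-1)+1) - g 1) := by rw [← Finset.mul_sum, tele g (M-1)]
        _ = 2 * (g M - g 1) := by rw [show (M-1)+1 = M by omega]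
    -- part 2 : Kusmin-Landau
    have hsinX : 0 < Real.sin (π * (g (X+1) - g X)) := by
      have h1 := hw1 X hMX
      have h2 := hw2 X hMX
      exact Real.sin_pos_of_pos_of_lt_pi (by positivity) (by nlinarith)
    have hpart2 : ‖∑ D ∈ Finset.Icc M X, Complex.exp ((↑(2*π*g D)) * Complex.I)‖
        ≤ (1 - Real.cos (π*(g (M+1) - g M))) / (2 * Real.sin (π*(g (M+1) - g M)))
          + (1 + Real.cos (π*(g (X+1) - g X))) / (2 * Real.sin (π*(g (X+1) - g X))) := by
      have htri : ‖∑ D ∈ Finset.Icc M X, Complex.exp ((↑(2*π*g D)) * Complex.I)‖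
          ≤ ‖(∑ D ∈ Finset.Icc M X, Complex.exp ((↑(2*π*g D)) * Complex.I))
              - (Complex.exp ((↑(2*π*(g (X+1) - g X))) * Complex.I) - 1)⁻¹
                * Complex.exp ((↑(2*π*g (X+1))) * Complex.I)‖
            + ‖(Complex.exp ((↑(2*π*(g (X+1) - g X))) * Complex.I) - 1)⁻¹
                * Complex.exp ((↑(2*π*g (X+1))) * Complex.I)‖ := by
        have := norm_add_le
          ((∑ D ∈ Finset.Icc M X, Complex.exp ((↑(2*π*g D)) * Complex.I))
            - (Complex.exp ((↑(2*π*(g (X+1) - g X))) * Complex.I) - 1)⁻¹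
              * Complex.exp ((↑(2*π*g (X+1))) * Complex.I))
          ((Complex.exp ((↑(2*π*(g (X+1) - g X))) * Complex.I) - 1)⁻¹
            * Complex.exp ((↑(2*π*g (X+1))) * Complex.I))
        simpa using this
      have habsc : ‖(Complex.exp ((↑(2*π*(g (X+1) - g X))) * Complex.I) - 1)⁻¹
            * Complex.exp ((↑(2*π*g (X+1))) * Complex.I)‖
          = 1 / (2 * Real.sin (π * (g (X+1) - g X))) := by
        rw [norm_mul, Complex.norm_exp_ofReal_mul_I, mul_one]
        exact abs_cinv (hw1 X hMX) (by linarith [hw2 X hMX])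
      rw [habsc] at htri
      refine htri.trans ?_
      have : (1 + Real.cos (π*(g (X+1) - g X))) / (2 * Real.sin (π*(g (X+1) - g X)))
          = Real.cos (π*(g (X+1) - g X)) / (2 * Real.sin (π*(g (X+1) - g X)))
            + 1 / (2 * Real.sin (π*(g (X+1) - g X))) := by
        rw [← add_div]; ring_nf
      rw [this]
      linarith [hblock]
    -- analytic bounds
    have hwM1 := hw1 M le_rfl
    have hwM2 := hw2 M le_rfl
    have hhead : (1 - Real.cos (π*(g (M+1) - g M))) / (2 * Real.sin (π*(g (M+1) - g M)))
        ≤ Real.sqrt 2 * (π*(g (M+1) - g M)) / 4 :=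
      headbound (mul_pos hπ hwM1) (by nlinarith)
    have htail : (1 + Real.cos (π*(g (X+1) - g X))) / (2 * Real.sin (π*(g (X+1) - g X)))
        ≤ 1 / (π*(g (X+1) - g X)) :=
      tailbound (mul_pos hπ (hw1 X hMX)) (by nlinarith [hw1 X hMX, hw2 X hMX])
    -- compare tails
    have hwXδ : (k:ℝ) * (f (X+2) - f (X+1)) < g (X+1) - g X := by
      simp only [hgval]; nlinarith
    have htail2 : 1 / (π*(g (X+1) - g X)) < 1 / (π * (k:ℝ) * (f (X+2) - f (X+1))) := by
      apply one_div_lt_one_div_of_lt (by positivity)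
      nlinarith
    -- bound the head pieces by g (X+1)
    have hgM : g M ≤ g (X+1) := hgmono M (X+1) hM1 (by omega)
    have hwMb : g (M+1) - g M ≤ g (X+1) := by
      have h1 : g (M+1) ≤ g (X+1) := hgmono (M+1) (X+1) (by omega) (by omega)
      have h2 : 0 < g M := by have := hfpos M hM1; simp only [hgval]; positivity
      linarith
    have hg1 : 0 < g 1 := by rw [hgval]; positivity
    have hgX1 : 0 < g (X+1) := by simp only [hgval]; positivity
    -- numeric : 2 + sqrt 2 * pi / 4 < pi
    have hsq2 : Real.sqrt 2 < 1.415 := by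
      nlinarith [Real.sq_sqrt (show (0:ℝ) ≤ 2 by norm_num), Real.sqrt_nonneg 2]
    have hpilt : π < 3.1416 := by linarith [Real.pi_lt_d6]
    have hpigt : 3.1415 < π := by linarith [Real.pi_gt_d6]
    have hnum : 2 + Real.sqrt 2 * π / 4 < π := by nlinarith [Real.sqrt_nonneg 2]
    have hheadX : Real.sqrt 2 * (π*(g (M+1) - g M)) / 4 ≤ Real.sqrt 2 * π / 4 * g (X+1) := by
      have := mul_le_mul_of_nonneg_left hwMb (by positivity : (0:ℝ) ≤ Real.sqrt 2 * π)
      nlinarith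
    have hfinal : 2 * (g M - g 1) + Real.sqrt 2 * π / 4 * g (X+1) < π * (k:ℝ) * f (X+1) := by
      have hgX1f : g (X+1) = (k:ℝ) * f (X+1) := hgval _
      nlinarith [mul_pos (show (0:ℝ) < π - (2 + Real.sqrt 2 * π / 4) by linarith) hgX1]
    calc ‖_‖ ≤ ‖∑ D ∈ Finset.Icc 1 (M-1), Complex.exp ((↑(2*π*g D)) * Complex.I)‖
          + ‖∑ D ∈ Finset.Icc M X, Complex.exp ((↑(2*π*g D)) * Complex.I)‖ :=
        norm_add_le _ _
      _ < Real.pi * (k:ℝ) * f (X+1) + 1 / (Real.pi * (k:ℝ) * (f (X+2) - f (X+1))) := by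
        linarith [hpart1, hpart2, hhead, htail, htail2, hheadX, hfinal]
  · -- trivial case: all differences ≥ 1/2
    push_neg at hcase
    have htriv : ‖∑ D ∈ Finset.Icc 1 X, Complex.exp ((↑(2*π*g D)) * Complex.I)‖
        ≤ (X:ℝ) := by
      calc ‖∑ D ∈ Finset.Icc 1 X, Complex.exp ((↑(2*π*g D)) * Complex.I)‖
          ≤ ∑ D ∈ Finset.Icc 1 X, ‖Complex.exp ((↑(2*π*g D)) * Complex.I)‖ :=
            norm_sum_le _ _
        _ = ∑ D ∈ Finset.Icc 1 X, (1:ℝ) := by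
            refine Finset.sum_congr rfl fun D _ => ?_
            exact Complex.norm_exp_ofReal_mul_I _
        _ = (X:ℝ) := by
            rw [Finset.sum_const, Nat.card_Icc]
            simp
    have hXb : (X:ℝ) ≤ 2 * (g (X+1) - g 1) := by
      have hsum : ∑ D ∈ Finset.Icc 1 X, (1:ℝ) ≤ ∑ D ∈ Finset.Icc 1 X, 2*(g (D+1) - g D) := by
        refine Finset.sum_le_sum fun D hD => ?_
        simp only [Finset.mem_Icc] at hD
        have := hwanti D X hD.1 hD.2
        linarith
      rw [← Finset.mul_sum, tele g X] at hsum
      rw [Finset.sum_const, Nat.card_Icc] at hsum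
      simpa using hsum
    have hg1 : 0 < g 1 := by rw [hgval]; positivity
    have hgX1 : g (X+1) = (k:ℝ) * f (X+1) := hgval _
    have : (X:ℝ) < π * (k:ℝ) * f (X+1) := by nlinarith [hfX1]
    linarith [htriv]
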